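/- Let a ∈ ℂ, s₀⁰, s₀^∞, s₁^∞ ∈ ℂ, and let G = [[g₁₁, g₁₂],[g₂₁, g₂₂]] be a 2×2 complex matrix with det G = g₁₁g₂₂ − g₁₂g₂₁ = 1. Set S₀⁰ := [[1, s₀⁰],[0,1]], S₀^∞ := [[1,0],[s₀^∞,1]], S₁^∞ := [[1, s₁^∞],[0,1]], σ₁ := [[0,1],[1,0]], σ₃ := [[1,0],[0,−1]], and E := [[e^{−π(a − i/2)}, 0],[0, e^{π(a − i/2)}]]. Then the semi-cyclic relation G⁻¹ S₀⁰ σ₁ G = S₀^∞ S₁^∞ σ₃ E holds if and only if the following four equations hold: (1) s₀^∞ s₁^∞ = −1 − e^{−2πa} − i s₀⁰ e^{−πa}; (2) g₂₂g₂₁ − g₁₁g₁₂ + s₀⁰ g₁₁g₂₂ = i e^{−πa}; (3) g₁₁² − g₂₁² − s₀⁰ g₁₁g₂₁ = i e^{−πa} s₀^∞; (4) g₂₂² − g₁₂² + s₀⁰ g₁₂g₂₂ = i e^{πa} s₁^∞. -/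
import Mathlib


open Complex Matrix

/-- `E := e^{−π(a − i/2)σ₃}`. -/
noncomputable def Emat (a : ℂ) : Matrix (Fin 2) (Fin 2) ℂ :=
  !![Complex.exp (-((Real.pi : ℂ) * (a - Complex.I / 2))), 0;
     0, Complex.exp ((Real.pi : ℂ) * (a - Complex.I / 2))]

/-- The semi-cyclic relation `G⁻¹ S₀⁰ σ₁ G = S₀^∞ S₁^∞ σ₃ E` is equivalent,
for an `SL(2,ℂ)` connection matrix `G`, to the four equations cutting out the
manifold of monodromy data. -/
theorem semicyclic_iff_monodromy_equations
    (a s00 s0inf s1inf : ℂ) (G : Matrix (Fin 2) (Fin 2) ℂ)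
    (hdet : G 0 0 * G 1 1 - G 0 1 * G 1 0 = 1) :
    (G⁻¹ * !![(1 : ℂ), s00; 0, 1] * !![(0 : ℂ), 1; 1, 0] * G
        = !![(1 : ℂ), 0; s0inf, 1] * !![(1 : ℂ), s1inf; 0, 1]
            * !![(1 : ℂ), 0; 0, -1] * Emat a)
      ↔ (s0inf * s1inf
            = -1 - Complex.exp (-(2 * (Real.pi : ℂ) * a))
              - Complex.I * s00 * Complex.exp (-((Real.pi : ℂ) * a)) ∧
          G 1 1 * G 1 0 - G 0 0 * G 0 1 + s00 * G 0 0 * G 1 1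
            = Complex.I * Complex.exp (-((Real.pi : ℂ) * a)) ∧
          (G 0 0) ^ 2 - (G 1 0) ^ 2 - s00 * G 0 0 * G 1 0
            = Complex.I * Complex.exp (-((Real.pi : ℂ) * a)) * s0inf ∧
          (G 1 1) ^ 2 - (G 0 1) ^ 2 + s00 * G 0 1 * G 1 1
            = Complex.I * Complex.exp ((Real.pi : ℂ) * a) * s1inf) := by
  have hdet' : G.det = 1 := by rw [Matrix.det_fin_two]; exact hdet
  have hGinv : G⁻¹ = !![G 1 1, -(G 0 1); -(G 1 0), G 0 0] := by
    rw [Matrix.inv_def, hdet', Matrix.adjugate_fin_two, Ring.inverse_one, one_smul]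
  have hI2 : Complex.exp ((Real.pi:ℂ) * (Complex.I/2)) = Complex.I := by
    have h : (Real.pi:ℂ) * (Complex.I/2) = (((Real.pi/2 : ℝ)):ℂ) * Complex.I := by push_cast; ring
    rw [h, Complex.exp_mul_I, ← Complex.ofReal_cos, ← Complex.ofReal_sin,
      Real.cos_pi_div_two, Real.sin_pi_div_two]
    simp
  have hE1 : Complex.exp (-((Real.pi:ℂ) * (a - Complex.I/2)))
      = Complex.I * Complex.exp (-((Real.pi:ℂ)*a)) := by
    rw [show -((Real.pi:ℂ)*(a - Complex.I/2)) = -((Real.pi:ℂ)*a) + (Real.pi:ℂ)*(Complex.I/2) by ring,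
      Complex.exp_add, hI2]; ring
  have hE2 : Complex.exp ((Real.pi:ℂ) * (a - Complex.I/2))
      = -Complex.I * Complex.exp ((Real.pi:ℂ)*a) := by
    rw [show (Real.pi:ℂ)*(a - Complex.I/2) = (Real.pi:ℂ)*a - (Real.pi:ℂ)*(Complex.I/2) by ring,
      Complex.exp_sub, hI2, div_eq_mul_inv, Complex.inv_I]; ring
  have hpq : Complex.exp (-((Real.pi:ℂ)*a)) * Complex.exp ((Real.pi:ℂ)*a) = 1 := by
    rw [← Complex.exp_add]; ring_nf; exact Complex.exp_zero
  have hexp2 : Complex.exp (-(2 * (Real.pi:ℂ) * a))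
      = Complex.exp (-((Real.pi:ℂ)*a)) * Complex.exp (-((Real.pi:ℂ)*a)) := by
    rw [← Complex.exp_add]; ring_nf
  rw [Emat, hGinv, hE1, hE2, Matrix.eta_fin_two G, ← Matrix.ext_iff]
  simp [Fin.forall_fin_two, Matrix.mul_apply, Fin.sum_univ_two]
  set p := Complex.exp (-((Real.pi:ℂ)*a)) with hp
  set q := Complex.exp ((Real.pi:ℂ)*a) with hq
  constructor
  · rintro ⟨⟨hA, hB⟩, hC, hD⟩
    refine ⟨?_, by linear_combination hA, by linear_combination hC, by linear_combination hB⟩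
    linear_combination (Complex.I*p)*hD + (Complex.I*p)*hA - Complex.I*p*s00*hdet
      - (1+s0inf*s1inf)*hpq + hexp2
      + (s0inf*s1inf*p*q + p*q + p^2) * Complex.I_sq
  · rintro ⟨hT1, hT2, hT3, hT4⟩
    refine ⟨⟨by linear_combination hT2, by linear_combination hT4⟩,
      by linear_combination hT3, ?_⟩
    linear_combination (-1)*hT2 + s00*hdet + (-(Complex.I*q))*hT1 + (-(Complex.I*q))*hexp2
      + (Complex.I*p - s00)*hpq + s00*p*q*Complex.I_sq + (2*Complex.I*q)*hexp2
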